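/- Let a < b be real numbers, let M ∈ ℝ, and let x : [a,b] → ℝ be differentiable with x(t) < M for all t ∈ [a,b] and x'(t) ≤ 2/(x(t) − M) for all t ∈ [a,b]. Then for every t ∈ [a,b]: x(t) ≤ M − √((M − x(a))² + 4(t − a)). -/

import Mathlib

/-- ODE comparison: a differentiable function `x` on `[a,b]` staying
below `M` and satisfying `x'(t) ≤ 2/(x(t) − M)` is dominated by the exact solution
`t ↦ M − √((M − x a)² + 4(t − a))`. -/
theorem stmt_5 (a b M : ℝ) (hab : a < b) (x x' : ℝ → ℝ)
    (hlt : ∀ t ∈ Set.Icc a b, x t < M)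
    (hderiv : ∀ t ∈ Set.Icc a b, HasDerivWithinAt x (x' t) (Set.Icc a b) t)
    (hbound : ∀ t ∈ Set.Icc a b, x' t ≤ 2 / (x t - M)) :
    ∀ t ∈ Set.Icc a b, x t ≤ M - Real.sqrt ((M - x a) ^ 2 + 4 * (t - a)) := by
  intro t ht
  have ha : a ∈ Set.Icc a b := Set.left_mem_Icc.2 hab.le
  -- F s = (M - x s)^2 - 4 s is monotone on [a,b]
  set F : ℝ → ℝ := fun s => (M - x s) ^ 2 - 4 * s with hF
  have hmono : MonotoneOn F (Set.Icc a b) := by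
    apply monotoneOn_of_hasDerivWithinAt_nonneg (convex_Icc a b)
      (f' := fun s => 2 * (M - x s) * (-x' s) - 4)
    · exact ContinuousOn.sub
        (((continuousOn_const.sub fun s hs => (hderiv s hs).continuousWithinAt).pow 2))
        (continuous_const.mul continuous_id).continuousOn
    · intro s hs
      have hs' : s ∈ Set.Icc a b := interior_subset hs
      have h1 : HasDerivWithinAt (fun s => (M - x s) ^ 2)
          (2 * (M - x s) * (-x' s)) (interior (Set.Icc a b)) s := by
        have := ((hderiv s hs').mono interior_subset).const_sub M
        simpa [mul_comm] using this.fun_pow 2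
      simpa using h1.fun_sub ((hasDerivWithinAt_id s _).const_mul 4)
    · intro s hs
      have hs' : s ∈ Set.Icc a b := interior_subset hs
      have hxM : 0 < M - x s := sub_pos.2 (hlt s hs')
      have hb := hbound s hs'
      have h2 : x' s ≤ -2 / (M - x s) := by
        rwa [show x s - M = -(M - x s) by ring, div_neg, ← neg_div] at hb
      have : -x' s ≥ 2 / (M - x s) := by
        have := neg_le_neg h2
        rw [neg_div] at this; linarith
      have h3 : 2 * (M - x s) * (-x' s) ≥ 2 * (M - x s) * (2 / (M - x s)) := by
        apply mul_le_mul_of_nonneg_left this (by positivity)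
      have h4 : 2 * (M - x s) * (2 / (M - x s)) = 4 := by
        field_simp; ring
      linarith [h4 ▸ h3]
  have hFt : F a ≤ F t := hmono ha ht ht.1
  have key : (M - x a) ^ 2 + 4 * (t - a) ≤ (M - x t) ^ 2 := by
    simp only [hF] at hFt; linarith
  have hxt : 0 < M - x t := sub_pos.2 (hlt t ht)
  have hsq : Real.sqrt ((M - x a) ^ 2 + 4 * (t - a)) ≤ M - x t := by
    rw [show M - x t = Real.sqrt ((M - x t) ^ 2) from (Real.sqrt_sq hxt.le).symm]
    exact Real.sqrt_le_sqrt key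
  linarith
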